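/- (Lemma 1 for categorical outcomes.) If the scoring rule S has a linear equivalent, then for every t ≥ 1, E[δ̂_t | 𝒢_{t−1}] = δ_t almost surely, where δ_t = S(𝐩_t, 𝐫_t) − S(𝐪_t, 𝐫_t) and δ̂_t = S(𝐩_t, 𝐲_t) − S(𝐪_t, 𝐲_t). -/

import Mathlib

open MeasureTheory Set

/-- A scoring rule `S` on the probability simplex `Δ^{K−1} × Δ^{K−1}` *has a linear
equivalent* if there is a bounded measurable `S̃` which is (the restriction of) an affine
map in its second argument and such that `S(𝐩,𝐫) − S̃(𝐩,𝐫)` does not depend on `𝐩`. -/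
def HasLinearEquivalentCat {K : ℕ} (S : (Fin K → ℝ) → (Fin K → ℝ) → ℝ) : Prop :=
  ∃ St : (Fin K → ℝ) → (Fin K → ℝ) → ℝ,
    Measurable (Function.uncurry St) ∧
    (∃ C : ℝ, ∀ p ∈ stdSimplex ℝ (Fin K), ∀ r ∈ stdSimplex ℝ (Fin K), |St p r| ≤ C) ∧
    (∀ p ∈ stdSimplex ℝ (Fin K), ∃ (a : ℝ) (b : Fin K → ℝ),
      ∀ r ∈ stdSimplex ℝ (Fin K), St p r = a + ∑ j, b j * r j) ∧
    (∀ p ∈ stdSimplex ℝ (Fin K), ∀ p' ∈ stdSimplex ℝ (Fin K), ∀ r ∈ stdSimplex ℝ (Fin K),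
      S p r - St p r = S p' r - St p' r)

/-- **Lemma 1 for categorical outcomes.**
If the scoring rule `S` has a linear equivalent, then for every `t ≥ 1`,
`E[δ̂_t | 𝒢_{t−1}] = δ_t` almost surely, where `δ_t = S(𝐩_t, 𝐫_t) − S(𝐪_t, 𝐫_t)` and
`δ̂_t = S(𝐩_t, 𝐲_t) − S(𝐪_t, 𝐲_t)`, the outcomes `𝐲_t` being one-hot vectors with
conditional mean `𝐫_t`. -/
theorem categorical_score_differential_conditionally_unbiased
    {Ω : Type*} {m0 : MeasurableSpace Ω} {P : Measure Ω} [IsProbabilityMeasure P]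
    (𝒢 : Filtration ℕ m0)
    (K : ℕ) (hK : 2 ≤ K)
    (S : (Fin K → ℝ) → (Fin K → ℝ) → ℝ)
    (hSmeas : Measurable (Function.uncurry S))
    (hSbdd : ∃ C : ℝ, ∀ p ∈ stdSimplex ℝ (Fin K), ∀ r ∈ stdSimplex ℝ (Fin K), |S p r| ≤ C)
    (hlin : HasLinearEquivalentCat S)
    (p q r y : ℕ → Ω → (Fin K → ℝ))
    (hp_pred : ∀ t : ℕ, 1 ≤ t → Measurable[𝒢 (t - 1)] (p t))
    (hq_pred : ∀ t : ℕ, 1 ≤ t → Measurable[𝒢 (t - 1)] (q t))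
    (hr_pred : ∀ t : ℕ, 1 ≤ t → Measurable[𝒢 (t - 1)] (r t))
    (hp_mem : ∀ t ω, p t ω ∈ stdSimplex ℝ (Fin K))
    (hq_mem : ∀ t ω, q t ω ∈ stdSimplex ℝ (Fin K))
    (hr_mem : ∀ t ω, r t ω ∈ stdSimplex ℝ (Fin K))
    (hy_adapted : ∀ t : ℕ, 1 ≤ t → Measurable[𝒢 t] (y t))
    (hy_onehot : ∀ t ω, ∃ k : Fin K, y t ω = fun j => if j = k then 1 else 0)
    (hy_cond : ∀ t : ℕ, 1 ≤ t → ∀ j : Fin K,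
      P[(fun ω => y t ω j) | 𝒢 (t - 1)] =ᵐ[P] (fun ω => r t ω j)) :
    ∀ t : ℕ, 1 ≤ t →
      P[(fun ω => S (p t ω) (y t ω) - S (q t ω) (y t ω)) | 𝒢 (t - 1)]
        =ᵐ[P] (fun ω => S (p t ω) (r t ω) - S (q t ω) (r t ω)) := by
  obtain ⟨St, hStmeas, ⟨C, hC⟩, hAff, hDiff⟩ := hlin
  intro t ht
  set m : MeasurableSpace Ω := 𝒢 (t - 1) with hm_def
  -- the basis vectors
  set e : Fin K → (Fin K → ℝ) := fun k j => if j = k then 1 else 0 with he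
  have heK : ∀ k, e k ∈ stdSimplex ℝ (Fin K) := by
    intro k
    constructor
    · intro j; by_cases h : j = k <;> simp [he, h]
    · simp [he]
  have hy_mem : ∀ ω, y t ω ∈ stdSimplex ℝ (Fin K) := by
    intro ω
    obtain ⟨k, hk⟩ := hy_onehot t ω
    rw [hk]; exact heK k
  -- key: on the simplex, St p · is determined by values at vertices
  have hkey : ∀ x ∈ stdSimplex ℝ (Fin K), ∀ z ∈ stdSimplex ℝ (Fin K),
      St x z = ∑ j, St x (e j) * z j := by
    intro x hx z hz
    obtain ⟨a, b, hab⟩ := hAff x hx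
    have h1 : ∀ j, St x (e j) = a + b j := by
      intro j
      rw [hab (e j) (heK j)]
      simp [he, Finset.sum_ite_eq']
    simp only [h1]
    rw [hab z hz]
    have hsum : ∑ j, z j = 1 := hz.2
    calc a + ∑ j, b j * z j
        = a * (∑ j, z j) + ∑ j, b j * z j := by rw [hsum, mul_one]
      _ = ∑ j, a * z j + ∑ j, b j * z j := by rw [Finset.mul_sum]
      _ = ∑ j, (a + b j) * z j := by
          rw [← Finset.sum_add_distrib]
          exact Finset.sum_congr rfl fun j _ => by ring
  -- difference identity
  have hSdiff : ∀ x ∈ stdSimplex ℝ (Fin K), ∀ x' ∈ stdSimplex ℝ (Fin K),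
      ∀ z ∈ stdSimplex ℝ (Fin K),
      S x z - S x' z = ∑ j, (St x (e j) - St x' (e j)) * z j := by
    intro x hx x' hx' z hz
    have h0 := hDiff x hx x' hx' z hz
    have h1 : S x z - S x' z = St x z - St x' z := by linarith
    rw [h1, hkey x hx z hz, hkey x' hx' z hz, ← Finset.sum_sub_distrib]
    exact Finset.sum_congr rfl fun j _ => by ring
  -- coefficient processes
  set c : Fin K → Ω → ℝ := fun j ω => St (p t ω) (e j) - St (q t ω) (e j) with hc
  have hcm : ∀ j, Measurable[m] (c j) := by
    intro j
    have h1 : Measurable (fun x : Fin K → ℝ => St x (e j)) :=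
      hStmeas.comp (measurable_id.prodMk measurable_const)
    exact (h1.comp (hp_pred t ht)).sub (h1.comp (hq_pred t ht))
  have hcbdd : ∀ j ω, |c j ω| ≤ 2 * C := by
    intro j ω
    have h1 := hC _ (hp_mem t ω) _ (heK j)
    have h2 := hC _ (hq_mem t ω) _ (heK j)
    calc |c j ω| ≤ |St (p t ω) (e j)| + |St (q t ω) (e j)| := abs_sub _ _
      _ ≤ 2 * C := by linarith
  have hm_le : m ≤ m0 := 𝒢.le (t - 1)
  have hym : Measurable[m0] (fun ω => y t ω) := (hy_adapted t ht).mono (𝒢.le t) le_rfl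
  have hyjm : ∀ j, Measurable[m0] (fun ω => y t ω j) := fun j =>
    (@measurable_pi_apply (Fin K) (fun _ => ℝ) _ j).comp hym
  have hyj_bdd : ∀ j ω, ‖y t ω j‖ ≤ 1 := by
    intro j ω
    obtain ⟨k, hk⟩ := hy_onehot t ω
    rw [hk]
    by_cases h : j = k <;> simp [h]
  have hint_y : ∀ j, Integrable (fun ω => y t ω j) P :=
    fun j => ⟨((hyjm j).aestronglyMeasurable : AEStronglyMeasurable[m0] _ P),
      HasFiniteIntegral.of_bounded (C := 1) (Filter.Eventually.of_forall (hyj_bdd j))⟩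
  have hint_cy : ∀ j, Integrable (c j * fun ω => y t ω j) P := by
    intro j
    refine ⟨((((hcm j).mono hm_le le_rfl).mul (hyjm j)).aestronglyMeasurable : AEStronglyMeasurable[m0] _ P),
      HasFiniteIntegral.of_bounded (C := 2 * C) (Filter.Eventually.of_forall fun ω => ?_)⟩
    have h1 := hcbdd j ω
    have h2 := hyj_bdd j ω
    have h3 : (0:ℝ) ≤ |c j ω| := abs_nonneg _
    calc ‖c j ω * y t ω j‖ = |c j ω| * |y t ω j| := abs_mul _ _
      _ ≤ |c j ω| * 1 := by
          exact mul_le_mul_of_nonneg_left (by simpa using h2) h3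
      _ ≤ 2 * C := by linarith
  -- rewrite LHS function
  have hfun : (fun ω => S (p t ω) (y t ω) - S (q t ω) (y t ω))
      = ∑ j, (c j * fun ω => y t ω j) := by
    funext ω
    rw [hSdiff _ (hp_mem t ω) _ (hq_mem t ω) _ (hy_mem ω)]
    simp [hc]
  rw [hfun]
  refine (condExp_finset_sum (fun j _ => hint_cy j) m).trans ?_
  have hj : ∀ j : Fin K, P[(c j * fun ω => y t ω j)|m] =ᵐ[P] fun ω => c j ω * r t ω j := by
    intro j
    have h1 := condExp_mul_of_stronglyMeasurable_left (m := m) (μ := P)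
      ((hcm j).stronglyMeasurable) (hint_cy j) (hint_y j)
    refine h1.trans ?_
    filter_upwards [hy_cond t ht j] with ω hω
    simp only [Pi.mul_apply]
    exact congrArg (c j ω * ·) hω
  have hall : ∀ᵐ ω ∂P, ∀ j : Fin K, (P[(c j * fun ω => y t ω j)|m]) ω = c j ω * r t ω j :=
    ae_all_iff.2 hj
  filter_upwards [hall] with ω hω
  simp only [Finset.sum_apply]
  rw [Finset.sum_congr rfl (fun j _ => hω j),
    hSdiff _ (hp_mem t ω) _ (hq_mem t ω) _ (hr_mem t ω)]
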